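/- arXiv:1608.05160 — 5 statements merged into one kernel-verified Lean document; each statement's English description precedes it below -/
import Mathlib

section
/- For every ordinal γ < ε₀ that is a limit ordinal and every ordinal β < γ, the fundamental-sequence element γ[mc(β)+1] satisfies γ[mc(β)+1] > β, where mc(β) is the maximal coefficient of β. -/
open Ordinal

namespace FGH

/-- `predO α = some β` iff the ordinal notation `α` denotes the successor `β + 1`. -/
def predO : ONote → Option ONote
  | ONote.zero => none
  | ONote.oadd e n a =>
    match a with
    | ONote.oadd e₁ n₁ a₁ => (predO (ONote.oadd e₁ n₁ a₁)).map (ONote.oadd e n)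
    | ONote.zero =>
      match e with
      | ONote.oadd _ _ _ => none
      | ONote.zero =>
        match h : (n : ℕ) with
        | 1 => some ONote.zero
        | (k + 2) => some (ONote.oadd ONote.zero ⟨k + 1, by omega⟩ ONote.zero)
        | 0 => none  -- impossible since `n : ℕ+`

/-- The standard fundamental sequence on Cantor normal forms:
`(δ + ω^(β+1))[x] = δ + ω^β·x` and `(δ + ω^λ)[x] = δ + ω^(λ[x])` for `λ` a limit.
(Junk values on non-limit notations.) -/
def fundSeq : ONote → ℕ → ONote
  | ONote.zero, _ => ONote.zero
  | ONote.oadd e n a, x =>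
    match a with
    | ONote.oadd e₁ n₁ a₁ => ONote.oadd e n (fundSeq (ONote.oadd e₁ n₁ a₁) x)
    | ONote.zero =>
      let tail : ONote :=
        match predO e with
        | some e' => if h : 0 < x then ONote.oadd e' ⟨x, h⟩ ONote.zero else ONote.zero
        | none => ONote.oadd (fundSeq e x) 1 ONote.zero
      if h : 1 < (n : ℕ) then ONote.oadd e ⟨(n : ℕ) - 1, by omega⟩ tail
      else tail

/-- `γ` is a limit ordinal notation. -/
def IsLim (γ : ONote) : Prop := Order.IsSuccLimit γ.repr

/-- Maximal coefficient: `mc 0 = 0`, `mc (ω^α₀·a₀ + ⋯ + ω^αₙ·aₙ) = max_i {mc αᵢ, aᵢ}`. -/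
def mc : ONote → ℕ
  | ONote.zero => 0
  | ONote.oadd e n a => max (max (mc e) (n : ℕ)) (mc a)

/-- One computation step for the fast growing hierarchy relative to `f`. -/
def Kstep (f : ℕ → ℕ) (p : List ONote × ℕ) : List ONote × ℕ :=
  match p.1.getLast? with
  | none => p
  | some α =>
    let t := p.1.dropLast
    if α = ONote.zero then (t, f p.2)
    else
      match predO α with
      | some β => (t ++ List.replicate (p.2 + 1) β, 1)
      | none => (t ++ [fundSeq α p.2], p.2)

/-- The measure `h(α₀ ⋯ αₙ, x) = ω^α₀ + ⋯ + ω^αₙ`. -/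
noncomputable def hMeasure (p : List ONote × ℕ) : Ordinal :=
  (p.1.map (fun a => omega0 ^ a.repr)).sum

/-- `Fdef f α x y` : the derivation of `F^f_α(x)` terminates with value `y`. -/
def Fdef (f : ℕ → ℕ) (α : ONote) (x y : ℕ) : Prop :=
  ∃ n : ℕ, (Kstep f)^[n] ([α], x) = ([], y)

/-- Relational iterate: `FdefIter f α k a b` means `(F^f_α)^(k)(a) = b`. -/
def FdefIter (f : ℕ → ℕ) (α : ONote) : ℕ → ℕ → ℕ → Prop
  | 0, a, b => b = a
  | (k + 1), a, b => ∃ c, FdefIter f α k a c ∧ Fdef f α c b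

/-- The tower of `ω`s: `ω₀ = 0`, `ω_{n+1} = ω^{ω_n}`. -/
def omegaTower : ℕ → ONote
  | 0 => ONote.zero
  | (d + 1) => ONote.oadd (omegaTower d) 1 ONote.zero

end FGH


namespace FGH

lemma repr_lt_omega0_opow (e : ONote) (he : e.NF) : e.repr < omega0 ^ e.repr := by
  induction e with
  | zero => simpa using zero_lt_one
  | oadd e1 n a ih1 _ =>
    have hb : (ONote.oadd e1 n a).repr < omega0 ^ (e1.repr + 1) :=
      (ONote.NF.below_of_lt (lt_add_of_pos_right _ zero_lt_one) he).repr_lt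
    refine hb.trans_le (opow_le_opow_right omega0_pos ?_)
    have h1 : e1.repr < (ONote.oadd e1 n a).repr :=
      lt_of_lt_of_le (ih1 he.fst) (ONote.omega0_le_oadd e1 n a)
    rw [Ordinal.add_one_eq_succ]
    exact Order.succ_le_of_lt h1

/-- NF oadd is below ω^(e+1). -/
lemma oadd_lt_opow_succ {e : ONote} {n : ℕ+} {a : ONote} (h : (ONote.oadd e n a).NF) :
    (ONote.oadd e n a).repr < omega0 ^ (e.repr + 1) :=
  (ONote.NF.below_of_lt (lt_add_of_pos_right _ zero_lt_one) h).repr_lt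

lemma predO_some : ∀ (e : ONote), e.NF → ∀ e', predO e = some e' → e.repr = e'.repr + 1 := by
  intro e
  induction e with
  | zero => intro _ e' h; simp [predO] at h
  | oadd e n a ihe iha =>
    intro hnf e' h
    cases a with
    | oadd e1 n1 a1 =>
      simp only [predO, Option.map_eq_some_iff] at h
      obtain ⟨a', ha', rfl⟩ := h
      have h2 := iha hnf.snd a' ha'
      have h3 : (ONote.oadd e n (ONote.oadd e1 n1 a1)).repr
          = omega0 ^ e.repr * n + (ONote.oadd e1 n1 a1).repr := rfl
      have h4 : (ONote.oadd e n a').repr = omega0 ^ e.repr * n + a'.repr := rfl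
      rw [h3, h4, h2, add_assoc]
    | zero =>
      cases e with
      | oadd e2 n2 a2 => simp [predO] at h
      | zero =>
        obtain ⟨m, hm⟩ := n
        match m, hm with
        | 1, hm =>
          have : e' = ONote.zero := by
            simpa [predO] using h.symm
          subst this
          simp
        | (k+2), hm =>
          have : e' = ONote.oadd ONote.zero ⟨k + 1, by omega⟩ ONote.zero := by
            simpa [predO] using h.symm
          subst this
          simp only [ONote.repr, opow_zero, one_mul, add_zero, PNat.mk_coe]
          push_cast
          rw [add_assoc, one_add_one_eq_two]

lemma mc_fst {e0 : ONote} {b0 : ℕ+} {b' : ONote} : mc e0 ≤ mc (ONote.oadd e0 b0 b') := by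
  simp [mc]
lemma mc_coeff {e0 : ONote} {b0 : ℕ+} {b' : ONote} : (b0 : ℕ) ≤ mc (ONote.oadd e0 b0 b') := by
  simp [mc]
lemma mc_snd {e0 : ONote} {b0 : ℕ+} {b' : ONote} : mc b' ≤ mc (ONote.oadd e0 b0 b') := by
  simp [mc]

lemma fundSeq_oadd_gt (e : ONote) (n : ℕ+) (hn : 1 < (n : ℕ)) (x : ℕ) :
    fundSeq (ONote.oadd e n ONote.zero) x =
      ONote.oadd e ⟨(n : ℕ) - 1, by omega⟩ (fundSeq (ONote.oadd e 1 ONote.zero) x) := by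
  rw [fundSeq, fundSeq]
  simp [hn]

lemma fundSeq_oadd_one_some (e e' : ONote) (h : predO e = some e') (x : ℕ) (hx : 0 < x) :
    fundSeq (ONote.oadd e 1 ONote.zero) x = ONote.oadd e' ⟨x, hx⟩ ONote.zero := by
  rw [fundSeq]
  simp [h, hx]

lemma fundSeq_oadd_one_none (e : ONote) (h : predO e = none) (x : ℕ) :
    fundSeq (ONote.oadd e 1 ONote.zero) x = ONote.oadd (fundSeq e x) 1 ONote.zero := by
  rw [fundSeq]
  simp [h]

lemma main : ∀ (o : Ordinal) (γ : ONote), γ.repr = o → γ.NF → γ ≠ ONote.zero →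
    predO γ = none → ∀ β : ONote, β.NF → β.repr < γ.repr → ∀ x : ℕ, mc β < x →
    β.repr < (fundSeq γ x).repr := by
  intro o
  induction o using Ordinal.induction with
  | _ o IH =>
  rintro γ rfl hγ h0 hp β hβ hlt x hx
  cases γ with
  | zero => exact absurd rfl h0
  | oadd e n a =>
  cases a with
  | oadd e1 n1 a1 =>
    have hpa : predO (ONote.oadd e1 n1 a1) = none := by
      rw [predO] at hp
      exact Option.map_eq_none_iff.mp hp
    have hAlt : (ONote.oadd e1 n1 a1).repr < (ONote.oadd e n (ONote.oadd e1 n1 a1)).repr :=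
      lt_of_lt_of_le hγ.snd'.repr_lt (ONote.omega0_le_oadd _ _ _)
    have hfs : fundSeq (ONote.oadd e n (ONote.oadd e1 n1 a1)) x
        = ONote.oadd e n (fundSeq (ONote.oadd e1 n1 a1) x) := by rw [fundSeq]
    rw [hfs]
    cases β with
    | zero => exact ONote.oadd_pos _ _ _
    | oadd e0 b0 b' =>
      have hβsucc : (ONote.oadd e0 b0 b').repr < omega0 ^ (e0.repr + 1) := oadd_lt_opow_succ hβ
      have he0 : e0.repr ≤ e.repr := by
        have h5 : omega0 ^ e0.repr ≤ (ONote.oadd e0 b0 b').repr := ONote.omega0_le_oadd _ _ _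
        have h6 : omega0 ^ e0.repr < omega0 ^ (e.repr + 1) :=
          lt_of_le_of_lt (h5.trans hlt.le) (oadd_lt_opow_succ hγ)
        have h7 := (opow_lt_opow_iff_right one_lt_omega0).mp h6
        rwa [Ordinal.add_one_eq_succ, Order.lt_succ_iff] at h7
      rcases lt_or_eq_of_le he0 with he0lt | he0eq
      · calc (ONote.oadd e0 b0 b').repr < omega0 ^ (e0.repr + 1) := hβsucc
          _ ≤ omega0 ^ e.repr := opow_le_opow_right omega0_pos (by
              rw [Ordinal.add_one_eq_succ]; exact Order.succ_le_of_lt he0lt)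
          _ ≤ _ := ONote.omega0_le_oadd _ _ _
      · have hb' : b'.repr < omega0 ^ e.repr := by
          rw [← he0eq]; exact hβ.snd'.repr_lt
        have hb0n : (b0 : ℕ) ≤ (n : ℕ) := by
          by_contra hcon
          push_neg at hcon
          have h7 : (ONote.oadd e n (ONote.oadd e1 n1 a1)).repr
              < omega0 ^ e.repr * ((↑(↑n : ℕ) : Ordinal) + 1) := by
            have heq : (ONote.oadd e n (ONote.oadd e1 n1 a1)).repr
                = omega0 ^ e.repr * (↑(↑n : ℕ) : Ordinal) + (ONote.oadd e1 n1 a1).repr := rfl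
            rw [heq, mul_add, mul_one]
            exact add_lt_add_right hγ.snd'.repr_lt _
          have h8 : omega0 ^ e.repr * ((↑(↑n : ℕ) : Ordinal) + 1)
              ≤ omega0 ^ e.repr * (↑(↑b0 : ℕ) : Ordinal) := by
            apply mul_le_mul_right
            have hcast : (↑(↑n : ℕ) : Ordinal) + 1 = ((((↑n : ℕ) + 1 : ℕ)) : Ordinal) := by
              push_cast; rfl
            rw [hcast]
            exact_mod_cast hcon
          have h9 : omega0 ^ e.repr * (↑(↑b0 : ℕ) : Ordinal) ≤ (ONote.oadd e0 b0 b').repr := by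
            rw [← he0eq]
            exact le_self_add
          exact absurd hlt (asymm ((h7.trans_le h8).trans_le h9))
        rcases lt_or_eq_of_le hb0n with hb0lt | hb0eq
        · have h10 : omega0 ^ e.repr * ((↑(↑b0 : ℕ) : Ordinal) + 1)
              ≤ omega0 ^ e.repr * (↑(↑n : ℕ) : Ordinal) := by
            apply mul_le_mul_right
            have hcast : (↑(↑b0 : ℕ) : Ordinal) + 1 = ((((↑b0 : ℕ) + 1 : ℕ)) : Ordinal) := by
              push_cast; rfl
            rw [hcast]
            exact_mod_cast hb0lt
          calc (ONote.oadd e0 b0 b').repr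
              < omega0 ^ e.repr * ((↑(↑b0 : ℕ) : Ordinal) + 1) := by
                have heq : (ONote.oadd e0 b0 b').repr
                    = omega0 ^ e.repr * (↑(↑b0 : ℕ) : Ordinal) + b'.repr := by
                  show omega0 ^ e0.repr * (↑(↑b0 : ℕ) : Ordinal) + b'.repr = _
                  rw [he0eq]
                rw [heq, mul_add, mul_one]
                exact add_lt_add_right hb' _
            _ ≤ omega0 ^ e.repr * (↑(↑n : ℕ) : Ordinal) := h10
            _ ≤ omega0 ^ e.repr * (↑(↑n : ℕ) : Ordinal)
                + (fundSeq (ONote.oadd e1 n1 a1) x).repr := le_self_add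
            _ = (ONote.oadd e n (fundSeq (ONote.oadd e1 n1 a1) x)).repr := rfl
        · have heq : (ONote.oadd e0 b0 b').repr
              = omega0 ^ e.repr * (↑(↑n : ℕ) : Ordinal) + b'.repr := by
            show omega0 ^ e0.repr * (↑(↑b0 : ℕ) : Ordinal) + b'.repr = _
            rw [he0eq, hb0eq]
          have hb'A : b'.repr < (ONote.oadd e1 n1 a1).repr := by
            rw [heq] at hlt
            exact lt_of_add_lt_add_left hlt
          have hrec := IH (ONote.oadd e1 n1 a1).repr hAlt (ONote.oadd e1 n1 a1) rfl hγ.snd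
            (fun h => ONote.noConfusion h) hpa b' hβ.snd hb'A x (lt_of_le_of_lt mc_snd hx)
          calc (ONote.oadd e0 b0 b').repr
              = omega0 ^ e.repr * (↑(↑n : ℕ) : Ordinal) + b'.repr := heq
            _ < omega0 ^ e.repr * (↑(↑n : ℕ) : Ordinal)
                + (fundSeq (ONote.oadd e1 n1 a1) x).repr := add_lt_add_right hrec _
            _ = (ONote.oadd e n (fundSeq (ONote.oadd e1 n1 a1) x)).repr := rfl
  | zero =>
    cases e with
    | zero =>
      exfalso
      obtain ⟨m, hm⟩ := n
      match m, hm, hp with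
      | 1, hm, hp => simp [predO] at hp
      | (k+2), hm, hp => simp [predO] at hp
    | oadd e2 n2 a2 =>
      by_cases hn : 1 < (n : ℕ)
      · rw [fundSeq_oadd_gt _ n hn x]
        have hNF1 : (ONote.oadd (ONote.oadd e2 n2 a2) 1 ONote.zero).NF :=
          ONote.NF.oadd hγ.fst 1 ONote.NFBelow.zero
        have hp1 : predO (ONote.oadd (ONote.oadd e2 n2 a2) 1 ONote.zero) = none := rfl
        have hr1lt : (ONote.oadd (ONote.oadd e2 n2 a2) 1 ONote.zero).repr
            < (ONote.oadd (ONote.oadd e2 n2 a2) n ONote.zero).repr := by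
          show omega0 ^ (ONote.oadd e2 n2 a2).repr * (↑((1:ℕ+) : ℕ) : Ordinal) + ONote.zero.repr
              < omega0 ^ (ONote.oadd e2 n2 a2).repr * (↑(↑n : ℕ) : Ordinal) + ONote.zero.repr
          have : ONote.zero.repr = 0 := rfl
          rw [this, add_zero, add_zero]
          refine (mul_lt_mul_iff_right₀ (opow_pos _ omega0_pos)).mpr ?_
          exact_mod_cast hn
        cases β with
        | zero => exact ONote.oadd_pos _ _ _
        | oadd e0 b0 b' =>
          have hβsucc : (ONote.oadd e0 b0 b').repr < omega0 ^ (e0.repr + 1) := oadd_lt_opow_succ hβ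
          have he0 : e0.repr ≤ (ONote.oadd e2 n2 a2).repr := by
            have h5 : omega0 ^ e0.repr ≤ (ONote.oadd e0 b0 b').repr := ONote.omega0_le_oadd _ _ _
            have h6 : omega0 ^ e0.repr < omega0 ^ ((ONote.oadd e2 n2 a2).repr + 1) :=
              lt_of_le_of_lt (h5.trans hlt.le) (oadd_lt_opow_succ hγ)
            have h7 := (opow_lt_opow_iff_right one_lt_omega0).mp h6
            rwa [Ordinal.add_one_eq_succ, Order.lt_succ_iff] at h7
          rcases lt_or_eq_of_le he0 with he0lt | he0eq
          · calc (ONote.oadd e0 b0 b').repr < omega0 ^ (e0.repr + 1) := hβsucc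
              _ ≤ omega0 ^ (ONote.oadd e2 n2 a2).repr := opow_le_opow_right omega0_pos (by
                  rw [Ordinal.add_one_eq_succ]; exact Order.succ_le_of_lt he0lt)
              _ ≤ _ := ONote.omega0_le_oadd _ _ _
          · have hb' : b'.repr < omega0 ^ (ONote.oadd e2 n2 a2).repr := by
              rw [← he0eq]; exact hβ.snd'.repr_lt
            have hb0n : (b0 : ℕ) < (n : ℕ) := by
              by_contra hcon
              push_neg at hcon
              have h9 : omega0 ^ (ONote.oadd e2 n2 a2).repr * (↑(↑n : ℕ) : Ordinal)
                  ≤ (ONote.oadd e0 b0 b').repr := by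
                rw [← he0eq]
                refine le_trans (mul_le_mul_right ?_ _) (le_self_add)
                exact_mod_cast hcon
              have h11 : (ONote.oadd (ONote.oadd e2 n2 a2) n ONote.zero).repr
                  ≤ (ONote.oadd e0 b0 b').repr := by
                show omega0 ^ (ONote.oadd e2 n2 a2).repr * (↑(↑n : ℕ) : Ordinal)
                    + ONote.zero.repr ≤ _
                have : ONote.zero.repr = 0 := rfl
                rw [this, add_zero]
                exact h9
              exact absurd hlt (not_lt.mpr h11)
            have hb'lt : b'.repr < (ONote.oadd (ONote.oadd e2 n2 a2) 1 ONote.zero).repr :=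
              lt_of_lt_of_le hb' (ONote.omega0_le_oadd _ _ _)
            have hrec := IH _ hr1lt _ rfl hNF1 (fun h => ONote.noConfusion h) hp1 b'
              hβ.snd hb'lt x (lt_of_le_of_lt mc_snd hx)
            have hstep : omega0 ^ (ONote.oadd e2 n2 a2).repr * (↑(↑b0 : ℕ) : Ordinal)
                ≤ omega0 ^ (ONote.oadd e2 n2 a2).repr * ((((↑n : ℕ) - 1 : ℕ)) : Ordinal) := by
              apply mul_le_mul_right
              exact_mod_cast (by omega : (↑b0 : ℕ) ≤ (↑n : ℕ) - 1)
            calc (ONote.oadd e0 b0 b').repr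
                = omega0 ^ (ONote.oadd e2 n2 a2).repr * (↑(↑b0 : ℕ) : Ordinal) + b'.repr := by
                  show omega0 ^ e0.repr * (↑(↑b0 : ℕ) : Ordinal) + b'.repr = _
                  rw [he0eq]
              _ ≤ omega0 ^ (ONote.oadd e2 n2 a2).repr * ((((↑n : ℕ) - 1 : ℕ)) : Ordinal)
                  + b'.repr := add_le_add_left hstep _
              _ < omega0 ^ (ONote.oadd e2 n2 a2).repr * ((((↑n : ℕ) - 1 : ℕ)) : Ordinal)
                  + (fundSeq (ONote.oadd (ONote.oadd e2 n2 a2) 1 ONote.zero) x).repr :=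
                  add_lt_add_right hrec _
              _ = (ONote.oadd (ONote.oadd e2 n2 a2) ⟨(↑n : ℕ) - 1, by omega⟩
                  (fundSeq (ONote.oadd (ONote.oadd e2 n2 a2) 1 ONote.zero) x)).repr := rfl
      · have hn1 : n = 1 := by
          have h12 : (n : ℕ) = 1 := le_antisymm (not_lt.mp hn) n.pos
          exact PNat.coe_injective h12
        subst hn1
        have hγr : (ONote.oadd (ONote.oadd e2 n2 a2) 1 ONote.zero).repr
            = omega0 ^ (ONote.oadd e2 n2 a2).repr := by
          show omega0 ^ (ONote.oadd e2 n2 a2).repr * (↑((1:ℕ+) : ℕ) : Ordinal)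
              + ONote.zero.repr = _
          simp
        rw [hγr] at hlt
        cases hpe : predO (ONote.oadd e2 n2 a2) with
        | some e' =>
          have hxpos : 0 < x := lt_of_le_of_lt (Nat.zero_le _) hx
          rw [fundSeq_oadd_one_some _ e' hpe x hxpos]
          have hee' : (ONote.oadd e2 n2 a2).repr = e'.repr + 1 := predO_some _ hγ.fst e' hpe
          rw [hee'] at hlt
          cases β with
          | zero =>
            calc (ONote.zero.repr) = 0 := rfl
              _ < omega0 ^ e'.repr := opow_pos _ omega0_pos
              _ ≤ _ := ONote.omega0_le_oadd _ _ _
          | oadd e0 b0 b' =>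
            have he0 : e0.repr ≤ e'.repr := by
              have h5 : omega0 ^ e0.repr ≤ (ONote.oadd e0 b0 b').repr := ONote.omega0_le_oadd _ _ _
              have h7 := (opow_lt_opow_iff_right one_lt_omega0).mp (lt_of_le_of_lt h5 hlt)
              rwa [Ordinal.add_one_eq_succ, Order.lt_succ_iff] at h7
            rcases lt_or_eq_of_le he0 with h | h
            · calc (ONote.oadd e0 b0 b').repr < omega0 ^ (e0.repr + 1) := oadd_lt_opow_succ hβ
                _ ≤ omega0 ^ e'.repr := opow_le_opow_right omega0_pos (by
                    rw [Ordinal.add_one_eq_succ]; exact Order.succ_le_of_lt h)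
                _ ≤ _ := ONote.omega0_le_oadd _ _ _
            · have hb' : b'.repr < omega0 ^ e'.repr := by rw [← h]; exact hβ.snd'.repr_lt
              have hb0x : (↑b0 : ℕ) + 1 ≤ x := by
                have h13 : (↑b0 : ℕ) ≤ mc (ONote.oadd e0 b0 b') := mc_coeff
                omega
              calc (ONote.oadd e0 b0 b').repr
                  = omega0 ^ e'.repr * (↑(↑b0 : ℕ) : Ordinal) + b'.repr := by
                    show omega0 ^ e0.repr * (↑(↑b0 : ℕ) : Ordinal) + b'.repr = _
                    rw [h]
                _ < omega0 ^ e'.repr * (↑(↑b0 : ℕ) : Ordinal) + omega0 ^ e'.repr :=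
                    add_lt_add_right hb' _
                _ = omega0 ^ e'.repr * ((((↑b0 : ℕ) + 1 : ℕ)) : Ordinal) := by
                    push_cast
                    rw [mul_add, mul_one]
                _ ≤ omega0 ^ e'.repr * ((x : ℕ) : Ordinal) :=
                    mul_le_mul_right (by exact_mod_cast hb0x) _
                _ ≤ (ONote.oadd e' ⟨x, hxpos⟩ ONote.zero).repr := by
                    show _ ≤ omega0 ^ e'.repr * (↑((⟨x, hxpos⟩ : ℕ+) : ℕ) : Ordinal)
                        + ONote.zero.repr
                    have : ONote.zero.repr = 0 := rfl
                    rw [this, add_zero]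
        | none =>
          rw [fundSeq_oadd_one_none _ hpe x]
          have hElt : (ONote.oadd e2 n2 a2).repr
              < (ONote.oadd (ONote.oadd e2 n2 a2) 1 ONote.zero).repr :=
            lt_of_lt_of_le (repr_lt_omega0_opow _ hγ.fst) (ONote.omega0_le_oadd _ _ _)
          cases β with
          | zero =>
            calc (ONote.zero.repr) = 0 := rfl
              _ < omega0 ^ (fundSeq (ONote.oadd e2 n2 a2) x).repr := opow_pos _ omega0_pos
              _ ≤ _ := ONote.omega0_le_oadd _ _ _
          | oadd e0 b0 b' =>
            have he0 : e0.repr < (ONote.oadd e2 n2 a2).repr := by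
              have h5 : omega0 ^ e0.repr ≤ (ONote.oadd e0 b0 b').repr := ONote.omega0_le_oadd _ _ _
              exact (opow_lt_opow_iff_right one_lt_omega0).mp (lt_of_le_of_lt h5 hlt)
            have hrec := IH _ hElt _ rfl hγ.fst (fun h => ONote.noConfusion h) hpe e0
              hβ.fst he0 x (lt_of_le_of_lt mc_fst hx)
            calc (ONote.oadd e0 b0 b').repr < omega0 ^ (e0.repr + 1) := oadd_lt_opow_succ hβ
              _ ≤ omega0 ^ (fundSeq (ONote.oadd e2 n2 a2) x).repr :=
                  opow_le_opow_right omega0_pos (by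
                    rw [Ordinal.add_one_eq_succ]; exact Order.succ_le_of_lt hrec)
              _ ≤ _ := ONote.omega0_le_oadd _ _ _

end FGH

open FGH

theorem stmt2 (γ : ONote) (hγ : γ.NF) (hlim : IsLim γ) (β : ONote) (hβ : β.NF)
    (h : β.repr < γ.repr) : β.repr < (fundSeq γ (mc β + 1)).repr := by
  have h0 : γ ≠ ONote.zero := by
    rintro rfl
    simp only [IsLim, ONote.repr] at hlim
    exact hlim.ne_bot rfl
  have hp : predO γ = none := by
    cases hpc : predO γ with
    | none => rfl
    | some e' =>
      have := predO_some γ hγ e' hpc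
      rw [IsLim, this, Ordinal.add_one_eq_succ] at hlim
      exact absurd hlim (Order.not_isSuccLimit_succ _)
  exact main γ.repr γ rfl hγ h0 hp β hβ h (mc β + 1) (Nat.lt_succ_self _)
end

section
/- If n is the smallest natural number such that K_f^{(n)}(([β]), y) = (empty, z), then for every finite sequence σ of ordinals, K_f^{(n)}((σ ++ [β]), y) = (σ, z). In other words, the computation steps only act on the last element of the sequence until the tail is consumed, and prepending a prefix commutes with the computation. -/
open Ordinal

open FGH

lemma Kstep_append (f : ℕ → ℕ) (σ l : List ONote) (x : ℕ) (hl : l ≠ []) :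
    Kstep f (σ ++ l, x) = (σ ++ (Kstep f (l, x)).1, (Kstep f (l, x)).2) := by
  obtain ⟨α, hα⟩ : ∃ α, l.getLast? = some α := by
    cases h : l.getLast? with
    | none => exact absurd (List.getLast?_eq_none_iff.mp h) hl
    | some a => exact ⟨a, rfl⟩
  have hσ : (σ ++ l).getLast? = some α := by
    rw [List.getLast?_append_of_ne_nil _ hl]; exact hα
  have hd : (σ ++ l).dropLast = σ ++ l.dropLast :=
    List.dropLast_append_of_ne_nil hl
  unfold Kstep
  simp only [hα, hσ, hd]
  by_cases h0 : α = ONote.zero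
  · simp [h0]
  · simp only [h0, if_false]
    cases predO α with
    | some b => simp [List.append_assoc]
    | none => simp [List.append_assoc]

lemma stmt7_aux (f : ℕ → ℕ) (z : ℕ) :
    ∀ n (p : List ONote × ℕ), (Kstep f)^[n] p = ([], z) →
    (∀ m < n, ((Kstep f)^[m] p).1 ≠ []) →
    ∀ σ : List ONote, (Kstep f)^[n] (σ ++ p.1, p.2) = (σ, z) := by
  intro n
  induction n with
  | zero =>
    intro p h1 _ σ
    simp only [Function.iterate_zero, id] at h1 ⊢
    rw [h1] at *
    simp
  | succ n ih =>
    intro p h1 h2 σ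
    have hne : p.1 ≠ [] := by
      have := h2 0 (Nat.succ_pos n)
      simpa using this
    rw [Function.iterate_succ_apply] at h1 ⊢
    have hstep : Kstep f (σ ++ p.1, p.2)
        = (σ ++ (Kstep f p).1, (Kstep f p).2) := by
      have := Kstep_append f σ p.1 p.2 hne
      simpa using this
    rw [hstep]
    exact ih (Kstep f p) h1
      (fun m hm => by
        have := h2 (m + 1) (Nat.succ_lt_succ hm)
        rwa [Function.iterate_succ_apply] at this) σ

theorem stmt7 (f : ℕ → ℕ) (β : ONote) (y z n : ℕ)
    (h1 : (Kstep f)^[n] ([β], y) = ([], z))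
    (h2 : ∀ m < n, ((Kstep f)^[m] ([β], y)).1 ≠ []) :
    ∀ σ : List ONote, (Kstep f)^[n] (σ ++ [β], y) = (σ, z) :=
  stmt7_aux f z n ([β], y) h1 h2
end

section
/- If f : ℕ → ℕ is strictly increasing and F^f_{α+1}(x) is defined (the computation terminates), then F^f_{α+1}(x) = (F^f_α)^{(x+1)}(1), i.e., the derivation-based definition of the fast growing hierarchy satisfies the successor recursion equation. -/
open Ordinal

open FGH


namespace FGH
open ONote

theorem predO_nat (p : ℕ+) (m : ℕ) (hp : (p : ℕ) = m + 2) :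
    predO (ONote.oadd ONote.zero p ONote.zero) =
      some (ONote.oadd ONote.zero ⟨m + 1, by omega⟩ ONote.zero) := by
  obtain ⟨v, hv⟩ := p
  have : v = m + 2 := hp
  subst this
  rfl

theorem add_one_eq (α : ONote) (hα : α.NF) :
    ∃ e m c, α + 1 = ONote.oadd e m c ∧ predO (α + 1) = some α := by
  induction α with
  | zero => exact ⟨0, 1, 0, rfl, rfl⟩
  | oadd e n b ihe ihb =>
    clear ihe
    cases e with
    | zero =>
      have hb0 : b = 0 := hα.zero_of_zero rfl
      subst hb0
      have h1 : ONote.oadd ONote.zero n ONote.zero + 1 = ONote.oadd ONote.zero (n + 1) ONote.zero := rfl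
      refine ⟨ONote.zero, n + 1, ONote.zero, h1, ?_⟩
      show predO (ONote.oadd ONote.zero n ONote.zero + 1) = some (ONote.oadd ONote.zero n ONote.zero)
      rw [h1]
      rw [predO_nat (n + 1) ((n : ℕ) - 1) (by have := n.pos; simp [PNat.add_coe]; omega)]
      congr 1
      congr 1
      exact PNat.coe_injective (by have := n.pos; simp; omega)
    | oadd e2 n2 a2 =>
      set E := ONote.oadd e2 n2 a2 with hE
      obtain ⟨eb, m, c, hb1, hpb⟩ := ihb hα.snd
      have hEpos : (0 : Ordinal) < ONote.repr E := by
        rw [hE]; exact ONote.oadd_pos _ _ _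
      have hone : ONote.NFBelow 1 (ONote.repr E) := by
        exact ONote.NFBelow.oadd ONote.NF.zero ONote.NFBelow.zero (by simpa using hEpos)
      have hbb : ONote.NFBelow (b + 1) (ONote.repr E) := ONote.add_nfBelow hα.snd' hone
      rw [hb1] at hbb
      have hlt : ONote.repr eb < ONote.repr E := hbb.lt
      have hNFeb : ONote.NF eb := hbb.fst
      have hNFE : ONote.NF E := hα.fst
      have hc : ONote.cmp E eb = Ordering.gt := by
        have cc := @ONote.cmp_compares E eb hNFE hNFeb
        cases h : ONote.cmp E eb with
        | lt => rw [h] at cc; exact absurd (ONote.lt_def.1 cc) (asymm hlt)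
        | eq => rw [h] at cc; exact absurd (cc ▸ hlt) (lt_irrefl _)
        | gt => rfl
      have h1 : ONote.oadd E n b + 1 = ONote.oadd E n (b + 1) := by
        rw [ONote.oadd_add, hb1]
        show ONote.addAux E n (ONote.oadd eb m c) = _
        unfold ONote.addAux
        dsimp only
        rw [hc]
      refine ⟨E, n, b + 1, h1, ?_⟩
      rw [h1, hb1]
      show (predO (ONote.oadd eb m c)).map (ONote.oadd E n) = _
      rw [← hb1, hpb]
      rfl

variable (f : ℕ → ℕ)

theorem Kstep_nil (a : ℕ) : Kstep f ([], a) = ([], a) := rfl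

theorem iter_nil (n a : ℕ) : (Kstep f)^[n] (([] : List ONote), a) = ([], a) := by
  induction n with
  | zero => rfl
  | succ n ih => rw [Function.iterate_succ_apply, Kstep_nil]; exact ih

theorem Kstep_concat (t : List ONote) (α : ONote) (a : ℕ) :
    Kstep f (t ++ [α], a) =
      if α = ONote.zero then (t, f a)
      else match predO α with
        | some β => (t ++ List.replicate (a + 1) β, 1)
        | none => (t ++ [fundSeq α a], a) := by
  unfold Kstep
  simp [List.getLast?_concat, List.dropLast_concat]

theorem Kstep_append (t r : List ONote) (α : ONote) (a : ℕ) :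
    Kstep f (t ++ (r ++ [α]), a) =
      (t ++ (Kstep f (r ++ [α], a)).1, (Kstep f (r ++ [α], a)).2) := by
  rw [← List.append_assoc, Kstep_concat, Kstep_concat]
  split
  · simp
  · split <;> simp

theorem iter_split : ∀ (n : ℕ) (t r : List ONote) (α : ONote) (a y : ℕ),
    (Kstep f)^[n] (t ++ (r ++ [α]), a) = ([], y) →
    ∃ m k b, m + k = n ∧ (Kstep f)^[m] (r ++ [α], a) = ([], b) ∧
      (Kstep f)^[k] (t, b) = ([], y) := by
  intro n
  induction n with
  | zero =>
    intro t r α a y h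
    simp only [Function.iterate_zero_apply, Prod.mk.injEq] at h
    exact absurd h.1 (by simp)
  | succ n ih =>
    intro t r α a y h
    rw [Function.iterate_succ_apply, Kstep_append] at h
    rcases (Kstep f (r ++ [α], a)).1.eq_nil_or_concat with hnil | ⟨r', α', hcon⟩
    on_goal 2 => rw [List.concat_eq_append] at hcon
    · refine ⟨1, n, (Kstep f (r ++ [α], a)).2, by omega, ?_, ?_⟩
      · rw [Function.iterate_one]
        exact Prod.ext hnil rfl
      · rw [hnil] at h; simpa using h
    · rw [hcon] at h
      obtain ⟨m, k, b, hmk, h1, h2⟩ := ih t r' α' (Kstep f (r ++ [α], a)).2 y h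
      refine ⟨m + 1, k, b, by omega, ?_, h2⟩
      rw [Function.iterate_succ_apply]
      rw [show Kstep f (r ++ [α], a) = (r' ++ [α'], (Kstep f (r ++ [α], a)).2) from
        Prod.ext hcon rfl] at h1 ⊢
      exact h1

theorem FdefIter_cons (α : ONote) (k a b : ℕ) :
    ∀ y, Fdef f α a b → FdefIter f α k b y → FdefIter f α (k + 1) a y := by
  induction k with
  | zero => intro y h1 h2; exact ⟨a, rfl, h2 ▸ h1⟩
  | succ k ih =>
    rintro y h1 ⟨c, hc, hcy⟩
    exact ⟨c, ih c h1 hc, hcy⟩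

theorem iter_replicate (α : ONote) :
    ∀ (k n a y : ℕ), (Kstep f)^[n] (List.replicate k α, a) = ([], y) →
      FdefIter f α k a y := by
  intro k
  induction k with
  | zero =>
    intro n a y h
    rw [List.replicate_zero, iter_nil] at h
    exact (Prod.mk.injEq _ _ _ _ ▸ h).2.symm ▸ (rfl : FdefIter f α 0 a a)
  | succ k ih =>
    intro n a y h
    rw [List.replicate_succ', show List.replicate k α ++ [α] =
      List.replicate k α ++ ([] ++ [α]) by simp] at h
    obtain ⟨m, k', b, _, h1, h2⟩ := iter_split f n _ [] α a y h
    exact FdefIter_cons f α k a b y ⟨m, by simpa using h1⟩ (ih k' b y h2)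

end FGH

theorem stmt9 (f : ℕ → ℕ) (hf : StrictMono f) (α : ONote) (hα : α.NF) (x y : ℕ)
    (h : Fdef f (α + 1) x y) : FdefIter f α (x + 1) 1 y := by
  obtain ⟨e, m, c, h1, h2⟩ := FGH.add_one_eq (α := α) hα
  have hK : Kstep f ([α + 1], x) = (List.replicate (x + 1) α, 1) := by
    rw [show ([α + 1] : List ONote) = [] ++ [α + 1] by simp, FGH.Kstep_concat]
    rw [if_neg (by rw [h1]; exact fun hz => ONote.noConfusion hz), h2]
    simp
  obtain ⟨n, hn⟩ := h
  cases n with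
  | zero =>
    simp only [Function.iterate_zero_apply, Prod.mk.injEq] at hn
    exact absurd hn.1 (by simp)
  | succ n =>
    rw [Function.iterate_succ_apply, hK] at hn
    exact FGH.iter_replicate f α (x + 1) n 1 y hn
end

section
/- If F^f_γ(x) is defined and γ < ε₀ is a limit ordinal, then F^f_γ(x) = F^f_{γ[x]}(x), i.e., the derivation-based definition satisfies the limit recursion equation. -/
open Ordinal

open FGH

lemma predO_succ : ∀ (γ β : ONote), predO γ = some β → ∃ o : Ordinal, γ.repr = o + 1
  | ONote.zero, β, h => by simp [predO] at h
  | ONote.oadd e n (ONote.oadd e₁ n₁ a₁), β, h => by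
    simp only [predO, Option.map_eq_some_iff] at h
    obtain ⟨β', hβ', rfl⟩ := h
    obtain ⟨o, ho⟩ := predO_succ _ _ hβ'
    refine ⟨Ordinal.omega0 ^ e.repr * n + o, ?_⟩
    have hr : (ONote.oadd e n (ONote.oadd e₁ n₁ a₁)).repr
        = Ordinal.omega0 ^ e.repr * n + (ONote.oadd e₁ n₁ a₁).repr := rfl
    rw [hr, ho, ← add_assoc]
  | ONote.oadd (ONote.oadd e₂ n₂ a₂) n ONote.zero, β, h => by
    simp [predO] at h
  | ONote.oadd ONote.zero n ONote.zero, β, h => by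
    refine ⟨((n : ℕ) - 1 : ℕ), ?_⟩
    have h1 : ((n : ℕ) : Ordinal) = (((n : ℕ) - 1 : ℕ) : Ordinal) + 1 := by
      have hk : (n : ℕ) - 1 + 1 = (n : ℕ) := Nat.succ_pred_eq_of_pos n.pos
      calc ((n : ℕ) : Ordinal) = (((n : ℕ) - 1 + 1 : ℕ) : Ordinal) := by rw [hk]
        _ = (((n : ℕ) - 1 : ℕ) : Ordinal) + 1 := by push_cast; ring
    have hr : (ONote.oadd ONote.zero n ONote.zero).repr = ((n : ℕ) : Ordinal) := by
      simp [ONote.repr]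
    rw [hr]
    exact h1

lemma lim_ne_zero {γ : ONote} (h : IsLim γ) : γ ≠ 0 := by
  rintro rfl
  simp [IsLim, ONote.repr] at h

lemma lim_predO_none {γ : ONote} (h : IsLim γ) : predO γ = none := by
  cases hp : predO γ with
  | none => rfl
  | some β =>
    obtain ⟨o, ho⟩ := predO_succ _ _ hp
    have hl : Order.IsSuccLimit (o + 1) := ho ▸ h
    rw [Ordinal.add_one_eq_succ] at hl
    exact absurd hl (Order.not_isSuccLimit_succ o)

theorem stmt10 (f : ℕ → ℕ) (γ : ONote) (hγ : γ.NF) (hlim : IsLim γ) (x y : ℕ)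
    (h : Fdef f γ x y) : Fdef f (fundSeq γ x) x y := by
  obtain ⟨n, hn⟩ := h
  have hstep : Kstep f ([γ], x) = ([fundSeq γ x], x) := by
    simp [Kstep, lim_ne_zero hlim, lim_predO_none hlim]
  cases n with
  | zero => simp at hn
  | succ m =>
    refine ⟨m, ?_⟩
    rw [Function.iterate_succ_apply, hstep] at hn
    exact hn
end

section
/- For every ordinal β < ε₀ and every natural x ≥ 1, in the step K_f applied to a state whose sequence ends in the successor β+1, the h-measure of the result equals h of the original state minus ω^{β+1} plus ω^β·(x+1), and hence strictly decreases: h(t ++ (x+1 copies of β), 1) < h(t ++ [β+1], x). -/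
open Ordinal

open FGH

theorem stmt16 (β : ONote) (hβ : β.NF) (t : List ONote) (x : ℕ) (hx : 1 ≤ x) :
    hMeasure (t ++ List.replicate (x + 1) β, 1)
        = hMeasure (t, 1) + omega0 ^ β.repr * (x + 1)
    ∧ hMeasure (t ++ [β + 1], x) = hMeasure (t, 1) + omega0 ^ (β.repr + 1)
    ∧ hMeasure (t ++ List.replicate (x + 1) β, 1) < hMeasure (t ++ [β + 1], x) := by
  have repl : ∀ n : ℕ, ((List.replicate n β).map (fun a => omega0 ^ a.repr)).sum
      = omega0 ^ β.repr * n := by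
    intro n
    induction n with
    | zero => simp
    | succ k ih =>
      rw [List.replicate_succ', List.map_append, List.sum_append, ih]
      simp [mul_succ, mul_add_one]
  haveI := hβ
  have hadd : (β + 1).repr = β.repr + 1 := by simp [ONote.repr_add]
  have h1 : hMeasure (t ++ List.replicate (x + 1) β, 1)
      = hMeasure (t, 1) + omega0 ^ β.repr * (x + 1) := by
    simp only [hMeasure, List.map_append, List.sum_append, repl]
    push_cast
    ring
  have h2 : hMeasure (t ++ [β + 1], x) = hMeasure (t, 1) + omega0 ^ (β.repr + 1) := by
    simp [hMeasure, hadd]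
  refine ⟨h1, h2, ?_⟩
  rw [h1, h2]
  apply (add_lt_add_iff_left _).mpr
  rw [Ordinal.opow_add, Ordinal.opow_one]
  have : ((x : Ordinal) + 1) < omega0 := by exact_mod_cast Ordinal.nat_lt_omega0 (x + 1)
  exact mul_lt_mul_of_pos_left this (Ordinal.opow_pos _ Ordinal.omega0_pos)
end
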